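/- Let n ≥ 1 and let id ∈ Sym(n) denote the identity permutation. Then Σ_{w ∈ S_{n+1}} y^{ino(w,id)} = Σ_{w ∈ S_{n+1}} y^{ℓ_R(w)}, as polynomials in ℤ[y], where ℓ_R(w) = (n+1) − c(w) is the reflection length of w and c(w) denotes the number of cycles of the permutation w (fixed points counted as cycles). -/

import Mathlib

open scoped Classical

/-- min of the values (in `{1,…,n+1}`, i.e. `(w p).val + 1`) of the block left of bar `σ i`
at step `i+1` (0-indexed step `i`) of the merging process of `(w,σ)`. -/
noncomputable def minL (n : ℕ) (w : Equiv.Perm (Fin (n+1))) (σ : Equiv.Perm (Fin n)) (i : Fin n) : ℕ :=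
  sInf {v : ℕ | ∃ p : Fin (n+1), p.val ≤ (σ i).val ∧
    (∀ j : Fin n, p.val ≤ j.val → j.val < (σ i).val → σ.symm j < i) ∧ v = (w p).val + 1}

/-- min of the values of the block right of bar `σ i` at step `i+1`. -/
noncomputable def minR (n : ℕ) (w : Equiv.Perm (Fin (n+1))) (σ : Equiv.Perm (Fin n)) (i : Fin n) : ℕ :=
  sInf {v : ℕ | ∃ q : Fin (n+1), (σ i).val < q.val ∧
    (∀ j : Fin n, (σ i).val < j.val → j.val < q.val → σ.symm j < i) ∧ v = (w q).val + 1}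

/-- `λ_{i+1}` of the pair `(w,σ)`: `max{min B, min B'}` with positive sign iff `min B < min B'`. -/
noncomputable def lam (n : ℕ) (w : Equiv.Perm (Fin (n+1))) (σ : Equiv.Perm (Fin n)) (i : Fin n) : ℤ :=
  if minL n w σ i < minR n w σ i then (max (minL n w σ i) (minR n w σ i) : ℤ)
  else -(max (minL n w σ i) (minR n w σ i) : ℤ)

/-- `ino(w,σ) = #{i : λ_i > 0}`. -/
noncomputable def ino (n : ℕ) (w : Equiv.Perm (Fin (n+1))) (σ : Equiv.Perm (Fin n)) : ℕ :=
  (Finset.univ.filter fun i : Fin n => 0 < lam n w σ i).card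

/-- `des(σ) = #{i ∈ {1,…,n−1} : σ(i) > σ(i+1)}` (0-indexed). -/
noncomputable def des (n : ℕ) (σ : Equiv.Perm (Fin n)) : ℕ :=
  (Finset.univ.filter fun k : Fin n => ∃ h : k.val + 1 < n, σ ⟨k.val + 1, h⟩ < σ k).card

/-- `asc(λ(w,σ)) = #{i ∈ {1,…,n−1} : λ_i < λ_{i+1}}` (0-indexed). -/
noncomputable def asc (n : ℕ) (w : Equiv.Perm (Fin (n+1))) (σ : Equiv.Perm (Fin n)) : ℕ :=
  (Finset.univ.filter fun k : Fin n => ∃ h : k.val + 1 < n, lam n w σ k < lam n w σ ⟨k.val + 1, h⟩).card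

/-- The setoid on `Fin (n+1)` whose classes are the cycles (orbits) of `w`,
fixed points included. -/
def cycleSetoid (n : ℕ) (w : Equiv.Perm (Fin (n+1))) : Setoid (Fin (n+1)) :=
  ⟨w.SameCycle, ⟨fun x => Equiv.Perm.SameCycle.refl w x, fun h => h.symm, fun h h' => h.trans h'⟩⟩

/-- The number of cycles of `w` (fixed points counted as cycles). -/
noncomputable def numCycles (n : ℕ) (w : Equiv.Perm (Fin (n+1))) : ℕ :=
  Nat.card (Quotient (cycleSetoid n w))

section AuxiliaryProofs
open Equiv Finset
-- concrete count: positions i+1 that are NOT left-to-right minima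
noncomputable def nrec (n : ℕ) (w : Equiv.Perm (Fin (n+1))) : ℕ :=
  (Finset.univ.filter fun i : Fin n => ∃ p : Fin (n+1), p.val ≤ i.val ∧ w p < w i.succ).card

variable {n : ℕ}

lemma minR_one (w : Equiv.Perm (Fin (n+1))) (i : Fin n) :
    minR n w 1 i = (w i.succ).val + 1 := by
  have hset : {v : ℕ | ∃ q : Fin (n+1), (((1 : Equiv.Perm (Fin n)) i)).val < q.val ∧
      (∀ j : Fin n, (((1 : Equiv.Perm (Fin n)) i)).val < j.val → j.val < q.val →
        (1 : Equiv.Perm (Fin n)).symm j < i) ∧ v = (w q).val + 1} = {(w i.succ).val + 1} := by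
    ext v
    simp only [Equiv.Perm.one_apply, Set.mem_setOf_eq, Set.mem_singleton_iff]
    constructor
    · rintro ⟨q, h1, h2, rfl⟩
      have hq : q = i.succ := by
        by_contra hne
        have hlt : i.val + 1 < q.val := by
          have := q.isLt
          have : q.val ≠ i.val + 1 := fun h => hne (Fin.ext (by simp [h]))
          omega
        have hn' : i.val + 1 < n := by have := q.isLt; omega
        have h3 := h2 ⟨i.val + 1, hn'⟩ (show i.val < i.val + 1 by omega) hlt
        have h4 : i.val + 1 < i.val := Fin.lt_def.mp h3
        omega
      rw [hq]
    · rintro rfl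
      refine ⟨i.succ, by simp [Fin.val_succ], fun j hj1 hj2 => absurd hj2 ?_, rfl⟩
      rw [Fin.val_succ]
      omega
  rw [minR, hset, csInf_singleton]

lemma minL_one_mem (w : Equiv.Perm (Fin (n+1))) (i : Fin n) :
    ∃ p : Fin (n+1), p.val ≤ i.val ∧ minL n w 1 i = (w p).val + 1 := by
  have hne : {v : ℕ | ∃ p : Fin (n+1), p.val ≤ (((1 : Equiv.Perm (Fin n)) i)).val ∧
      (∀ j : Fin n, p.val ≤ j.val → j.val < (((1 : Equiv.Perm (Fin n)) i)).val →
        (1 : Equiv.Perm (Fin n)).symm j < i) ∧ v = (w p).val + 1}.Nonempty := by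
    exact ⟨(w i.castSucc).val + 1, i.castSucc, le_of_eq (Fin.coe_castSucc i),
      fun j hj1 hj2 => Fin.lt_def.mpr hj2, rfl⟩
  obtain ⟨p, hp, _, hv⟩ := Nat.sInf_mem hne
  exact ⟨p, by simpa using hp, hv⟩

lemma minL_one_le (w : Equiv.Perm (Fin (n+1))) (i : Fin n) (p : Fin (n+1)) (hp : p.val ≤ i.val) :
    minL n w 1 i ≤ (w p).val + 1 := by
  apply Nat.sInf_le
  exact ⟨p, hp, fun j hj1 hj2 => Fin.lt_def.mpr hj2, rfl⟩

lemma lam_one_pos_iff (w : Equiv.Perm (Fin (n+1))) (i : Fin n) :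
    0 < lam n w 1 i ↔ ∃ p : Fin (n+1), p.val ≤ i.val ∧ w p < w i.succ := by
  have hR : minR n w 1 i = (w i.succ).val + 1 := minR_one w i
  rw [lam]
  by_cases h : minL n w 1 i < minR n w 1 i
  · rw [if_pos h]
    have hpos : (0:ℤ) < max (minL n w 1 i : ℤ) (minR n w 1 i : ℤ) := by
      have : (1:ℤ) ≤ (minR n w 1 i : ℤ) := by rw [hR]; exact_mod_cast Nat.succ_le_succ (Nat.zero_le _)
      have := le_max_right (minL n w 1 i : ℤ) (minR n w 1 i : ℤ)
      omega
    simp only [hpos, true_iff]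
    obtain ⟨p, hp, hv⟩ := minL_one_mem w i
    refine ⟨p, hp, ?_⟩
    rw [hv, hR] at h
    exact Fin.lt_def.mpr (by omega)
  · rw [if_neg h]
    have hneg : ¬ (0:ℤ) < -max (minL n w 1 i : ℤ) (minR n w 1 i : ℤ) := by
      have : (1:ℤ) ≤ (minR n w 1 i : ℤ) := by rw [hR]; exact_mod_cast Nat.succ_le_succ (Nat.zero_le _)
      have := le_max_right (minL n w 1 i : ℤ) (minR n w 1 i : ℤ)
      omega
    simp only [hneg, false_iff]
    rintro ⟨p, hp, hlt⟩
    have := minL_one_le w i p hp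
    rw [hR] at h
    have hlt' : (w p).val < (w i.succ).val := Fin.lt_def.mp hlt
    omega

lemma ino_one (w : Equiv.Perm (Fin (n+1))) : ino n w 1 = nrec n w := by
  unfold ino nrec
  congr 1
  exact Finset.filter_congr fun i _ => lam_one_pos_iff w i

/-- insert value `v` at the last position -/
def insE (n : ℕ) (e : Equiv.Perm (Fin (n+1))) (v : Fin (n+2)) : Equiv.Perm (Fin (n+2)) :=
  finSuccEquivLast.trans ((e.optionCongr).trans (finSuccEquiv' v).symm)

variable {n : ℕ}

@[simp] lemma insE_castSucc (e : Equiv.Perm (Fin (n+1))) (v : Fin (n+2)) (x : Fin (n+1)) :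
    insE n e v x.castSucc = v.succAbove (e x) := by
  simp [insE]

@[simp] lemma insE_last (e : Equiv.Perm (Fin (n+1))) (v : Fin (n+2)) :
    insE n e v (Fin.last (n+1)) = v := by
  simp [insE]

lemma insE_bijective (n : ℕ) :
    Function.Bijective (fun p : Equiv.Perm (Fin (n+1)) × Fin (n+2) => insE n p.1 p.2) := by
  rw [Fintype.bijective_iff_injective_and_card]
  constructor
  · rintro ⟨e, v⟩ ⟨e', v'⟩ h
    simp only at h
    have hv : v = v' := by
      have := congrArg (fun (f : Equiv.Perm (Fin (n+2))) => f (Fin.last (n+1))) h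
      simpa using this
    subst hv
    have he : e = e' := by
      apply Equiv.ext
      intro x
      have := congrArg (fun (f : Equiv.Perm (Fin (n+2))) => f x.castSucc) h
      simp only [insE_castSucc] at this
      exact Fin.succAbove_right_injective this
    simp [he]
  · simp only [Fintype.card_prod, Fintype.card_perm, Fintype.card_fin, Nat.factorial_succ]
    ring

lemma nrec_insE (e : Equiv.Perm (Fin (n+1))) (v : Fin (n+2)) :
    nrec (n+1) (insE n e v) = nrec n e + (if v = 0 then 0 else 1) := by
  unfold nrec
  rw [Finset.card_filter, Finset.card_filter, Fin.sum_univ_castSucc]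
  congr 1
  · apply Finset.sum_congr rfl
    intro x _
    congr 1
    apply propext
    constructor
    · rintro ⟨p, hp, hlt⟩
      have hpn : p.val < n + 1 := by
        have := x.isLt
        simp only [Fin.coe_castSucc] at hp
        omega
      set p' : Fin (n+1) := ⟨p.val, hpn⟩ with hp'
      have hpc : p = p'.castSucc := by ext; simp [hp']
      rw [hpc, insE_castSucc] at hlt
      rw [Fin.succ_castSucc, insE_castSucc] at hlt
      exact ⟨p', by simpa using hp, Fin.succAbove_lt_succAbove_iff.mp hlt⟩
    · rintro ⟨p', hp, hlt⟩
      refine ⟨p'.castSucc, by simpa using hp, ?_⟩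
      rw [Fin.succ_castSucc, insE_castSucc, insE_castSucc]
      exact Fin.succAbove_lt_succAbove_iff.mpr hlt
  · have hsucc : (Fin.last n).succ = Fin.last (n+1) := Fin.succ_last n
    rw [hsucc]
    have : (∃ p : Fin (n+2), p.val ≤ n ∧ insE n e v p < v) ↔ v ≠ 0 := by
      constructor
      · rintro ⟨p, hp, hlt⟩
        exact Fin.pos_iff_ne_zero.mp (lt_of_le_of_lt (Fin.zero_le _) hlt)
      · intro hv
        refine ⟨(insE n e v)⁻¹ 0, ?_, ?_⟩
        · have hne : (insE n e v)⁻¹ 0 ≠ Fin.last (n+1) := by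
            intro h
            apply hv
            rw [← insE_last e v, ← h, ← Equiv.Perm.mul_apply, mul_inv_cancel, Equiv.Perm.one_apply]
          have := Fin.val_lt_last hne
          omega
        · rw [← Equiv.Perm.mul_apply, mul_inv_cancel, Equiv.Perm.one_apply]
          exact Fin.pos_iff_ne_zero.mpr hv
    simp only [insE_last, Fin.val_last]
    by_cases hv : v = 0
    · simp [this, hv]
    · simp [this, hv]


open Polynomial in
lemma sum_fin_pow_ite (m : ℕ) :
    ∑ v : Fin (m+1), (X : ℤ[X]) ^ (if v = 0 then 0 else 1) = 1 + (m : ℤ[X]) * X := by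
  rw [Fin.sum_univ_succ]
  simp only [if_pos rfl, pow_zero]
  have : ∀ i : Fin m, (X : ℤ[X]) ^ (if (i.succ : Fin (m+1)) = 0 then 0 else 1) = X := by
    intro i
    rw [if_neg (Fin.succ_ne_zero i), pow_one]
  rw [Finset.sum_congr rfl (fun i _ => this i), Finset.sum_const, Finset.card_univ,
    Fintype.card_fin, nsmul_eq_mul]
  push_cast
  ring

open Polynomial in
lemma sum_pow_nrec (n : ℕ) :
    ∑ w : Equiv.Perm (Fin (n+1)), (X : ℤ[X]) ^ nrec n w
      = ∏ k ∈ Finset.range n, (1 + ((k : ℤ[X]) + 1) * X) := by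
  induction n with
  | zero =>
    rw [Finset.range_zero, Finset.prod_empty]
    have h0 : ∀ w : Equiv.Perm (Fin 1), nrec 0 w = 0 := by
      intro w
      unfold nrec
      simp
    rw [Finset.sum_congr rfl (fun w _ => by rw [h0 w, pow_zero])]
    rw [Finset.sum_const, Finset.card_univ, Fintype.card_perm, Fintype.card_fin]
    simp
  | succ n ih =>
    rw [Finset.prod_range_succ, ← ih]
    have hfac : (1 + ((n : Polynomial ℤ) + 1) * X)
        = ∑ v : Fin (n+2), (X : ℤ[X]) ^ (if v = 0 then 0 else 1) := by
      rw [sum_fin_pow_ite (n+1)]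
      push_cast
      ring
    rw [hfac]
    rw [← Fintype.sum_bijective _ (insE_bijective n)
      (fun p : Equiv.Perm (Fin (n+1)) × Fin (n+2) => (X : ℤ[X]) ^ nrec (n+1) (insE n p.1 p.2))
      (fun w => (X : ℤ[X]) ^ nrec (n+1) w) (fun p => rfl)]
    rw [Fintype.sum_prod_type]
    rw [Finset.sum_mul]
    apply Finset.sum_congr rfl
    intro e _
    rw [Finset.mul_sum]
    apply Finset.sum_congr rfl
    intro v _
    rw [nrec_insE, pow_add]

variable {n : ℕ}

lemma card_quotient_eq {α : Type*} [Fintype α] [LinearOrder α] (s : Setoid α) (t : Finset α)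
    (ht : ∀ x, x ∈ t ↔ ∀ y, s.r x y → x ≤ y) :
    Nat.card (Quotient s) = t.card := by
  rw [Nat.card_eq_fintype_card, ← Finset.card_univ]
  symm
  apply Finset.card_bij (fun (a : α) (_ : a ∈ t) => (Quotient.mk s a))
  · intro a _
    exact Finset.mem_univ _
  · intro a ha b hb hab
    rw [ht] at ha hb
    have hr : s.r a b := Quotient.exact hab
    exact le_antisymm (ha b hr) (hb a (s.iseqv.symm hr))
  · intro c _
    induction c using Quotient.ind with
    | _ x =>
      have hx : x ∈ Finset.univ.filter (fun y => s.r x y) := by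
        simp only [Finset.mem_filter, Finset.mem_univ, true_and]
        exact s.iseqv.refl x
      have hT : (Finset.univ.filter (fun y => s.r x y)).Nonempty := ⟨x, hx⟩
      have hmem : (Finset.univ.filter (fun y => s.r x y)).min' hT
          ∈ Finset.univ.filter (fun y => s.r x y) := Finset.min'_mem _ hT
      rw [Finset.mem_filter] at hmem
      refine ⟨(Finset.univ.filter (fun y => s.r x y)).min' hT, ?_, ?_⟩
      · rw [ht]
        intro y hy
        apply Finset.min'_le
        rw [Finset.mem_filter]
        exact ⟨Finset.mem_univ _, s.iseqv.trans hmem.2 hy⟩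
      · exact Quotient.sound (s.iseqv.symm hmem.2)

lemma numCycles_eq (n : ℕ) (w : Equiv.Perm (Fin (n+1))) :
    numCycles n w = (Finset.univ.filter fun x : Fin (n+1) => ∀ y, w.SameCycle x y → x ≤ y).card := by
  exact card_quotient_eq (cycleSetoid n w) _ (fun x => by
    simp only [Finset.mem_filter, Finset.mem_univ, true_and]
    exact Iff.rfl)

lemma numCycles_pos (n : ℕ) (w : Equiv.Perm (Fin (n+1))) : 1 ≤ numCycles n w := by
  have : Nonempty (Quotient (cycleSetoid n w)) := ⟨Quotient.mk _ 0⟩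
  exact Nat.card_pos

lemma numCycles_le (n : ℕ) (w : Equiv.Perm (Fin (n+1))) : numCycles n w ≤ n + 1 := by
  have h := Nat.card_le_card_of_surjective (Quotient.mk (cycleSetoid n w)) Quotient.mk_surjective
  rw [Nat.card_eq_fintype_card (α := Fin (n+1)), Fintype.card_fin] at h
  exact h

/-- extend a permutation of `Fin (n+1)` to `Fin (n+2)` fixing the last element -/
def extLast (n : ℕ) (e : Equiv.Perm (Fin (n+1))) : Equiv.Perm (Fin (n+2)) :=
  finSuccEquivLast.trans ((e.optionCongr).trans finSuccEquivLast.symm)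

@[simp] lemma extLast_castSucc (e : Equiv.Perm (Fin (n+1))) (x : Fin (n+1)) :
    extLast n e x.castSucc = (e x).castSucc := by
  simp [extLast]

@[simp] lemma extLast_last (e : Equiv.Perm (Fin (n+1))) :
    extLast n e (Fin.last (n+1)) = Fin.last (n+1) := by
  simp [extLast]

lemma extLast_pow_castSucc (e : Equiv.Perm (Fin (n+1))) (k : ℕ) (x : Fin (n+1)) :
    ((extLast n e)^k) x.castSucc = ((e^k) x).castSucc := by
  induction k with
  | zero => simp
  | succ k ih => rw [pow_succ', pow_succ', Equiv.Perm.mul_apply, Equiv.Perm.mul_apply, ih,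
      extLast_castSucc]

lemma extLast_pow_last (e : Equiv.Perm (Fin (n+1))) (k : ℕ) :
    ((extLast n e)^k) (Fin.last (n+1)) = Fin.last (n+1) := by
  induction k with
  | zero => simp
  | succ k ih => rw [pow_succ', Equiv.Perm.mul_apply, ih, extLast_last]

/-- insert the last element into the cycle structure of `e`, right before `q`
(or as a fixed point if `q` is the last element itself). -/
def insD (n : ℕ) (e : Equiv.Perm (Fin (n+1))) (q : Fin (n+2)) : Equiv.Perm (Fin (n+2)) :=
  (extLast n e) * (Equiv.swap q (Fin.last (n+1)))

lemma insD_last_eq (e : Equiv.Perm (Fin (n+1))) :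
    insD n e (Fin.last (n+1)) = extLast n e := by
  rw [insD, Equiv.swap_self]
  ext x
  simp [Equiv.Perm.mul_apply]

lemma insD_apply_castSucc (e : Equiv.Perm (Fin (n+1))) (q' : Fin (n+1)) (a : Fin (n+1)) :
    insD n e q'.castSucc a.castSucc
      = if a = q' then Fin.last (n+1) else (e a).castSucc := by
  rw [insD, Equiv.Perm.mul_apply]
  by_cases h : a = q'
  · rw [if_pos h, h, Equiv.swap_apply_left, extLast_last]
  · rw [if_neg h, Equiv.swap_apply_of_ne_of_ne
      (fun hc => h (Fin.castSucc_injective _ hc)) (Fin.ne_of_lt (Fin.castSucc_lt_last a)),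
      extLast_castSucc]

lemma insD_apply_last (e : Equiv.Perm (Fin (n+1))) (q' : Fin (n+1)) :
    insD n e q'.castSucc (Fin.last (n+1)) = (e q').castSucc := by
  rw [insD, Equiv.Perm.mul_apply, Equiv.swap_apply_right, extLast_castSucc]

-- SameCycle facts for extLast
lemma sameCycle_extLast_iff (e : Equiv.Perm (Fin (n+1))) (a b : Fin (n+1)) :
    (extLast n e).SameCycle a.castSucc b.castSucc ↔ e.SameCycle a b := by
  constructor
  · intro h
    obtain ⟨i, _, hi⟩ := h.exists_pow_eq'
    rw [extLast_pow_castSucc] at hi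
    exact ⟨(i : ℤ), by rw [zpow_natCast]; exact Fin.castSucc_injective _ hi⟩
  · intro h
    obtain ⟨i, _, hi⟩ := h.exists_pow_eq'
    exact ⟨(i : ℤ), by rw [zpow_natCast, extLast_pow_castSucc, hi]⟩

lemma not_sameCycle_extLast_last (e : Equiv.Perm (Fin (n+1))) (a : Fin (n+1)) :
    ¬ (extLast n e).SameCycle a.castSucc (Fin.last (n+1)) := by
  intro h
  obtain ⟨i, _, hi⟩ := h.exists_pow_eq'
  rw [extLast_pow_castSucc] at hi
  exact Fin.ne_of_lt (Fin.castSucc_lt_last _) hi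

lemma sameCycle_extLast_last_iff (e : Equiv.Perm (Fin (n+1))) (y : Fin (n+2)) :
    (extLast n e).SameCycle (Fin.last (n+1)) y → y = Fin.last (n+1) := by
  intro h
  obtain ⟨i, _, hi⟩ := h.exists_pow_eq'
  rw [extLast_pow_last] at hi
  exact hi.symm

-- SameCycle facts for insD at a non-last point
lemma insD_step (e : Equiv.Perm (Fin (n+1))) (q' : Fin (n+1)) (a : Fin (n+1)) :
    (insD n e q'.castSucc).SameCycle a.castSucc (e a).castSucc := by
  by_cases h : a = q'
  · have h1 : insD n e q'.castSucc a.castSucc = Fin.last (n+1) := by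
      rw [insD_apply_castSucc, if_pos h]
    have h2 : (e a).castSucc = insD n e q'.castSucc (insD n e q'.castSucc a.castSucc) := by
      rw [h1, insD_apply_last, h]
    rw [h2]
    exact Equiv.Perm.sameCycle_apply_right.mpr
      (Equiv.Perm.sameCycle_apply_right.mpr (Equiv.Perm.SameCycle.refl _ _))
  · have h2 : (e a).castSucc = insD n e q'.castSucc a.castSucc := by
      rw [insD_apply_castSucc, if_neg h]
    rw [h2]
    exact Equiv.Perm.sameCycle_apply_right.mpr (Equiv.Perm.SameCycle.refl _ _)

lemma insD_sameCycle_pow (e : Equiv.Perm (Fin (n+1))) (q' : Fin (n+1)) (i : ℕ) (a : Fin (n+1)) :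
    (insD n e q'.castSucc).SameCycle a.castSucc ((e ^ i) a).castSucc := by
  induction i with
  | zero =>
    simp only [pow_zero, Equiv.Perm.one_apply]
    exact Equiv.Perm.SameCycle.refl _ _
  | succ i ih =>
    have h : ((e ^ (i+1)) a) = e ((e ^ i) a) := by rw [pow_succ', Equiv.Perm.mul_apply]
    rw [h]
    exact ih.trans (insD_step e q' ((e ^ i) a))

lemma insD_sameCycle_of (e : Equiv.Perm (Fin (n+1))) (q' : Fin (n+1)) (a b : Fin (n+1))
    (h : e.SameCycle a b) :
    (insD n e q'.castSucc).SameCycle a.castSucc b.castSucc := by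
  obtain ⟨i, _, hi⟩ := h.exists_pow_eq'
  subst hi
  exact insD_sameCycle_pow e q' i a

def projQ (q' : Fin (n+1)) (x : Fin (n+2)) : Fin (n+1) :=
  if h : x = Fin.last (n+1) then q' else x.castPred h

@[simp] lemma projQ_castSucc (q' : Fin (n+1)) (a : Fin (n+1)) : projQ q' a.castSucc = a := by
  rw [projQ, dif_neg (Fin.ne_of_lt (Fin.castSucc_lt_last a))]
  exact Fin.castPred_castSucc _

@[simp] lemma projQ_last (q' : Fin (n+1)) : projQ q' (Fin.last (n+1)) = q' := dif_pos rfl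

lemma projQ_step (e : Equiv.Perm (Fin (n+1))) (q' : Fin (n+1)) (x : Fin (n+2)) :
    e.SameCycle (projQ q' x) (projQ q' (insD n e q'.castSucc x)) := by
  induction x using Fin.lastCases with
  | last =>
    rw [insD_apply_last, projQ_last, projQ_castSucc]
    exact Equiv.Perm.sameCycle_apply_right.mpr (Equiv.Perm.SameCycle.refl _ _)
  | cast a =>
    rw [insD_apply_castSucc, projQ_castSucc]
    by_cases h : a = q'
    · rw [if_pos h, projQ_last, h]
    · rw [if_neg h, projQ_castSucc]
      exact Equiv.Perm.sameCycle_apply_right.mpr (Equiv.Perm.SameCycle.refl _ _)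

lemma projQ_iter (e : Equiv.Perm (Fin (n+1))) (q' : Fin (n+1)) (k : ℕ) (x : Fin (n+2)) :
    e.SameCycle (projQ q' x) (projQ q' (((insD n e q'.castSucc) ^ k) x)) := by
  induction k with
  | zero =>
    simp only [pow_zero, Equiv.Perm.one_apply]
    exact Equiv.Perm.SameCycle.refl _ _
  | succ k ih =>
    have : ((insD n e q'.castSucc ^ (k+1)) x) = insD n e q'.castSucc ((insD n e q'.castSucc ^ k) x) := by
      rw [pow_succ', Equiv.Perm.mul_apply]
    rw [this]
    exact ih.trans (projQ_step e q' _)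

lemma insD_sameCycle_to (e : Equiv.Perm (Fin (n+1))) (q' : Fin (n+1)) (x y : Fin (n+2))
    (h : (insD n e q'.castSucc).SameCycle x y) : e.SameCycle (projQ q' x) (projQ q' y) := by
  obtain ⟨k, _, hk⟩ := h.exists_pow_eq'
  subst hk
  exact projQ_iter e q' k x

lemma insD_sameCycle_last (e : Equiv.Perm (Fin (n+1))) (q' : Fin (n+1)) :
    (insD n e q'.castSucc).SameCycle q'.castSucc (Fin.last (n+1)) := by
  have h1 : insD n e q'.castSucc q'.castSucc = Fin.last (n+1) := by
    rw [insD_apply_castSucc, if_pos rfl]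
  rw [← h1]
  exact Equiv.Perm.sameCycle_apply_right.mpr (Equiv.Perm.SameCycle.refl _ _)

lemma filter_extLast (e : Equiv.Perm (Fin (n+1))) :
    (Finset.univ.filter fun x : Fin (n+2) => ∀ y, (extLast n e).SameCycle x y → x ≤ y)
      = insert (Fin.last (n+1))
        ((Finset.univ.filter fun x : Fin (n+1) => ∀ y, e.SameCycle x y → x ≤ y).image
          Fin.castSucc) := by
  ext x
  simp only [Finset.mem_filter, Finset.mem_univ, true_and, Finset.mem_insert, Finset.mem_image]
  induction x using Fin.lastCases with
  | last =>
    constructor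
    · intro _
      exact Or.inl rfl
    · intro _ y hy
      rw [sameCycle_extLast_last_iff e y hy]
  | cast a =>
    constructor
    · intro h
      refine Or.inr ⟨a, ?_, rfl⟩
      intro b hb
      have := h b.castSucc ((sameCycle_extLast_iff e a b).mpr hb)
      exact Fin.castSucc_le_castSucc_iff.mp this
    · rintro (h | ⟨b, hb, hcb⟩)
      · exact absurd h (Fin.ne_of_lt (Fin.castSucc_lt_last a))
      · have hba : b = a := Fin.castSucc_injective _ hcb
        subst hba
        intro y hy
        induction y using Fin.lastCases with
        | last => exact absurd hy (not_sameCycle_extLast_last e b)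
        | cast c =>
          exact Fin.castSucc_le_castSucc_iff.mpr (hb c ((sameCycle_extLast_iff e b c).mp hy))

lemma filter_insD_ne (e : Equiv.Perm (Fin (n+1))) (q' : Fin (n+1)) :
    (Finset.univ.filter fun x : Fin (n+2) => ∀ y, (insD n e q'.castSucc).SameCycle x y → x ≤ y)
      = ((Finset.univ.filter fun x : Fin (n+1) => ∀ y, e.SameCycle x y → x ≤ y).image
          Fin.castSucc) := by
  ext x
  simp only [Finset.mem_filter, Finset.mem_univ, true_and, Finset.mem_image]
  induction x using Fin.lastCases with
  | last =>
    constructor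
    · intro h
      exfalso
      have h1 := h q'.castSucc (insD_sameCycle_last e q').symm
      exact absurd h1 (not_le.mpr (Fin.castSucc_lt_last q'))
    · rintro ⟨b, _, hcb⟩
      exact absurd hcb (Fin.ne_of_lt (Fin.castSucc_lt_last b))
  | cast a =>
    constructor
    · intro h
      refine ⟨a, ?_, rfl⟩
      intro b hb
      have := h b.castSucc (insD_sameCycle_of e q' a b hb)
      exact Fin.castSucc_le_castSucc_iff.mp this
    · rintro ⟨b, hb, hcb⟩
      have hba : b = a := Fin.castSucc_injective _ hcb
      subst hba
      intro y hy
      induction y using Fin.lastCases with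
      | last => exact Fin.le_last _
      | cast c =>
        have := insD_sameCycle_to e q' b.castSucc c.castSucc hy
        rw [projQ_castSucc, projQ_castSucc] at this
        exact Fin.castSucc_le_castSucc_iff.mpr (hb c this)

lemma last_not_mem_image (t : Finset (Fin (n+1))) :
    Fin.last (n+1) ∉ t.image Fin.castSucc := by
  intro h
  obtain ⟨b, _, hb⟩ := Finset.mem_image.mp h
  exact absurd hb (Fin.ne_of_lt (Fin.castSucc_lt_last b))

lemma numCycles_insD_last (e : Equiv.Perm (Fin (n+1))) :
    numCycles (n+1) (insD n e (Fin.last (n+1))) = numCycles n e + 1 := by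
  rw [numCycles_eq, numCycles_eq, insD_last_eq, filter_extLast,
    Finset.card_insert_of_notMem (last_not_mem_image _),
    Finset.card_image_of_injective _ (Fin.castSucc_injective _)]

lemma numCycles_insD_ne (e : Equiv.Perm (Fin (n+1))) (q : Fin (n+2)) (hq : q ≠ Fin.last (n+1)) :
    numCycles (n+1) (insD n e q) = numCycles n e := by
  obtain ⟨q', rfl⟩ := Fin.exists_castSucc_eq.mpr hq
  rw [numCycles_eq, numCycles_eq, filter_insD_ne,
    Finset.card_image_of_injective _ (Fin.castSucc_injective _)]

lemma extLast_eq_last_iff (e : Equiv.Perm (Fin (n+1))) (z : Fin (n+2)) :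
    extLast n e z = Fin.last (n+1) ↔ z = Fin.last (n+1) := by
  constructor
  · intro h
    have := extLast_last e
    exact (extLast n e).injective (h.trans this.symm)
  · intro h
    rw [h, extLast_last]

lemma insD_apply_self (e : Equiv.Perm (Fin (n+1))) (q : Fin (n+2)) :
    insD n e q q = Fin.last (n+1) := by
  rw [insD, Equiv.Perm.mul_apply, Equiv.swap_apply_left, extLast_last]

lemma insD_bijective (n : ℕ) :
    Function.Bijective (fun p : Equiv.Perm (Fin (n+1)) × Fin (n+2) => insD n p.1 p.2) := by
  rw [Fintype.bijective_iff_injective_and_card]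
  constructor
  · rintro ⟨e, q⟩ ⟨e', q'⟩ h
    simp only at h
    have hq : q = q' := by
      have h1 : insD n e' q' q = Fin.last (n+1) := by rw [← h, insD_apply_self]
      rw [insD, Equiv.Perm.mul_apply, extLast_eq_last_iff] at h1
      have := congrArg (Equiv.swap q' (Fin.last (n+1))) h1
      rw [Equiv.swap_apply_self, Equiv.swap_apply_right] at this
      exact this
    subst hq
    have he : e = e' := by
      have h2 : extLast n e = extLast n e' := by
        have := congrArg (fun f => f * (Equiv.swap q (Fin.last (n+1)))⁻¹) h
        simpa [insD, mul_assoc] using this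
      apply Equiv.ext
      intro x
      apply Fin.castSucc_injective
      rw [← extLast_castSucc e x, ← extLast_castSucc e' x, h2]
    rw [he]
  · simp only [Fintype.card_prod, Fintype.card_perm, Fintype.card_fin, Nat.factorial_succ]
    ring

open Polynomial in
lemma sum_fin_pow_ite_last (m : ℕ) :
    ∑ v : Fin (m+1), (X : ℤ[X]) ^ (if v = Fin.last m then 0 else 1) = 1 + (m : ℤ[X]) * X := by
  rw [Fin.sum_univ_castSucc]
  rw [if_pos rfl, pow_zero]
  have h : ∀ i : Fin m, (X : ℤ[X]) ^ (if (i.castSucc : Fin (m+1)) = Fin.last m then 0 else 1)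
      = X := by
    intro i
    rw [if_neg (Fin.ne_of_lt (Fin.castSucc_lt_last i)), pow_one]
  rw [Finset.sum_congr rfl (fun i _ => h i), Finset.sum_const, Finset.card_univ,
    Fintype.card_fin, nsmul_eq_mul]
  push_cast
  ring

lemma insD_exponent (e : Equiv.Perm (Fin (n+1))) (q : Fin (n+2)) :
    (n + 1 + 1) - numCycles (n+1) (insD n e q)
      = ((n + 1) - numCycles n e) + (if q = Fin.last (n+1) then 0 else 1) := by
  have h1 := numCycles_pos n e
  have h2 := numCycles_le n e
  by_cases hq : q = Fin.last (n+1)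
  · rw [if_pos hq, hq, numCycles_insD_last]
    omega
  · rw [if_neg hq, numCycles_insD_ne e q hq]
    omega

open Polynomial in
lemma sum_pow_refl (n : ℕ) :
    ∑ w : Equiv.Perm (Fin (n+1)), (X : ℤ[X]) ^ ((n + 1) - numCycles n w)
      = ∏ k ∈ Finset.range n, (1 + ((k : ℤ[X]) + 1) * X) := by
  induction n with
  | zero =>
    rw [Finset.range_zero, Finset.prod_empty]
    have h0 : ∀ w : Equiv.Perm (Fin 1), (0 + 1) - numCycles 0 w = 0 := by
      intro w
      have h1 := numCycles_pos 0 w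
      have h2 := numCycles_le 0 w
      omega
    rw [Finset.sum_congr rfl (fun w _ => by rw [h0 w, pow_zero])]
    rw [Finset.sum_const, Finset.card_univ, Fintype.card_perm, Fintype.card_fin]
    simp
  | succ n ih =>
    rw [Finset.prod_range_succ, ← ih]
    have hfac : (1 + ((n : Polynomial ℤ) + 1) * X)
        = ∑ v : Fin (n+2), (X : ℤ[X]) ^ (if v = Fin.last (n+1) then 0 else 1) := by
      rw [sum_fin_pow_ite_last (n+1)]
      push_cast
      ring
    rw [hfac]
    rw [← Fintype.sum_bijective _ (insD_bijective n)
      (fun p : Equiv.Perm (Fin (n+1)) × Fin (n+2) =>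
        (X : ℤ[X]) ^ ((n + 1 + 1) - numCycles (n+1) (insD n p.1 p.2)))
      (fun w => (X : ℤ[X]) ^ ((n + 1 + 1) - numCycles (n+1) w)) (fun p => rfl)]
    rw [Fintype.sum_prod_type]
    rw [Finset.sum_mul]
    apply Finset.sum_congr rfl
    intro e _
    rw [Finset.mul_sum]
    apply Finset.sum_congr rfl
    intro v _
    rw [insD_exponent, pow_add]

end AuxiliaryProofs

/-- `Σ_{w ∈ S_{n+1}} y^{ino(w,id)} = Σ_{w ∈ S_{n+1}} y^{ℓ_R(w)}` in `ℤ[y]`,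
where `ℓ_R(w) = (n+1) − c(w)` is the reflection length and `c(w)` the number of cycles. -/
theorem ino_id_equidistributed_with_reflection_length (n : ℕ) (hn : 1 ≤ n) :
    ∑ w : Equiv.Perm (Fin (n+1)), (Polynomial.X : Polynomial ℤ) ^ ino n w 1
      = ∑ w : Equiv.Perm (Fin (n+1)), (Polynomial.X : Polynomial ℤ) ^ ((n + 1) - numCycles n w) := by
  have h1 : ∀ w : Equiv.Perm (Fin (n+1)), ino n w 1 = nrec n w := ino_one
  calc ∑ w : Equiv.Perm (Fin (n+1)), (Polynomial.X : Polynomial ℤ) ^ ino n w 1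
      = ∑ w : Equiv.Perm (Fin (n+1)), (Polynomial.X : Polynomial ℤ) ^ nrec n w :=
        Finset.sum_congr rfl (fun w _ => by rw [h1 w])
    _ = ∏ k ∈ Finset.range n, (1 + ((k : Polynomial ℤ) + 1) * Polynomial.X) := sum_pow_nrec n
    _ = ∑ w : Equiv.Perm (Fin (n+1)), (Polynomial.X : Polynomial ℤ) ^ ((n + 1) - numCycles n w) :=
        (sum_pow_refl n).symm
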